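/- arXiv:q-alg/9710039 — 6 statements merged into one kernel-verified Lean document; each statement's English description precedes it below -/
import Mathlib

section
/- Let R be a commutative ring, let A be an associative R-algebra, and let x, y ∈ A satisfy the Jordan plane relation x·y = y·x + y·y. Then for every p ∈ R and every natural number k, the ordered product identity (x + p•y)^k = (x + (p−k+1)•y)·(x + (p−k+3)•y)·(x + (p−k+5)•y)· … ·(x + (p+k−1)•y) holds, i.e., (x + p•y)^k = ∏_{i=0}^{k−1} (x + (p − k + 1 + 2i)•y), where the factors are multiplied in order of increasing i from left to right and integers are interpreted in R via the canonical ring map ℤ → R. -/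
section
variable {R : Type*} {A : Type*} [CommRing R] [Ring A] [Algebra R A]
  (x y : A)

lemma jp_swap (hxy : x * y = y * x + y * y) (q r : R) :
    (x + q • y) * (x + r • y) = (x + (r - 1) • y) * (x + (q + 1) • y) := by
  simp only [add_mul, mul_add, smul_mul_assoc, mul_smul_comm, smul_smul, hxy]
  module

lemma jp_bubble (hxy : x * y = y * x + y * y) : ∀ (k : ℕ) (q r : R),
    (x + q • y) * ((List.range k).map (fun i : ℕ => x + (r + 2 * (i : R)) • y)).prod
      = ((List.range k).map (fun i : ℕ => x + (r - 1 + 2 * (i : R)) • y)).prod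
          * (x + (q + (k : R)) • y) := by
  intro k
  induction k with
  | zero => simp
  | succ k ih =>
    intro q r
    rw [List.range_succ_eq_map]
    simp only [List.map_cons, List.prod_cons, List.map_map]
    have h1 : ((fun i : ℕ => x + (r + 2 * (i : R)) • y) ∘ Nat.succ)
        = fun i : ℕ => x + ((r + 2) + 2 * (i : R)) • y := by
      funext i; simp only [Function.comp]; congr 1; push_cast; ring
    have h2 : ((fun i : ℕ => x + (r - 1 + 2 * (i : R)) • y) ∘ Nat.succ)
        = fun i : ℕ => x + ((r + 2) - 1 + 2 * (i : R)) • y := by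
      funext i; simp only [Function.comp]; congr 1; push_cast; ring
    rw [h1, h2, ← mul_assoc, jp_swap x y hxy, Nat.cast_zero, mul_assoc,
      ih (q + 1) (r + 2)]
    have h3 : r + 2 - 1 = r - 1 + 2 * ((0 : ℕ) : R) + 2 := by push_cast; ring
    have h4 : q + 1 + (k : R) = q + ((k + 1 : ℕ) : R) := by push_cast; ring
    rw [h3, h4, mul_assoc]
    ring_nf

end

/-- Jordan plane identity: for `x y` in an associative `R`-algebra satisfying
`x * y = y * x + y * y`, we have
`(x + p • y) ^ k = ∏_{i=0}^{k-1} (x + (p - k + 1 + 2 i) • y)` with factors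
multiplied from left to right in order of increasing `i`. -/
theorem jordan_plane_ordered_product_identity
    (R : Type*) (A : Type*) [CommRing R] [Ring A] [Algebra R A]
    (x y : A) (hxy : x * y = y * x + y * y) (p : R) (k : ℕ) :
    (x + p • y) ^ k =
      ((List.range k).map
        (fun (i : ℕ) => x + (p - (k : R) + 1 + 2 * (i : R)) • y)).prod := by
  induction k with
  | zero => simp
  | succ k ih =>
    rw [pow_succ', ih]
    have h1 : (fun i : ℕ => x + (p - (k : R) + 1 + 2 * (i : R)) • y)
        = fun i : ℕ => x + ((p - (k : R) + 1) + 2 * (i : R)) • y := rfl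
    rw [h1, jp_bubble x y hxy k p (p - (k : R) + 1), List.range_succ, List.map_append,
      List.prod_append]
    have h2 : (fun i : ℕ => x + (p - ((k + 1 : ℕ) : R) + 1 + 2 * (i : R)) • y)
        = fun i : ℕ => x + ((p - (k : R) + 1) - 1 + 2 * (i : R)) • y := by
      funext i; congr 1; push_cast; ring
    rw [h2]
    simp only [List.map_cons, List.prod_cons, List.map_nil, List.prod_nil, mul_one]
    congr 2
    ring
end

section
/- Let R be a commutative ring, let A be an associative R-algebra, and let x, y ∈ A satisfy x·y = y·x + y·y. Then for every p ∈ R and every natural number k, (x + p•y)^k = Σ_{i=0}^{k} C(k,i)·(p·(p+1)·…·(p+i−1))•(y^i · x^{k−i}), where C(k,i) is the binomial coefficient, p·(p+1)·…·(p+i−1) denotes the rising factorial in R (equal to 1 when i = 0), and integer shifts are interpreted in R via the canonical ring map ℤ → R. -/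
/-- In an associative `R`-algebra, if `x * y = y * x + y * y`, then for every
`p : R` and natural number `k`,
`(x + p • y) ^ k = ∑_{i=0}^{k} C(k,i) * (p (p+1) ⋯ (p+i-1)) • (y ^ i * x ^ (k - i))`,
where the rising factorial is `(ascPochhammer R i).eval p`. -/
theorem jordan_plane_binomial_expansion
    (R : Type*) (A : Type*) [CommRing R] [Ring A] [Algebra R A]
    (x y : A) (hxy : x * y = y * x + y * y) (p : R) (k : ℕ) :
    (x + p • y) ^ k =
      ∑ i ∈ Finset.range (k + 1),
        ((k.choose i : R) * (ascPochhammer R i).eval p) • (y ^ i * x ^ (k - i)) := by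
  have hx : ∀ i : ℕ, x * y ^ i = y ^ i * x + (i : R) • y ^ (i + 1) := by
    intro i
    induction i with
    | zero => simp
    | succ n ih =>
      have h1 : x * y ^ (n + 1) = (x * y ^ n) * y := by
        rw [pow_succ, ← mul_assoc]
      rw [h1, ih, add_mul, smul_mul_assoc, mul_assoc, hxy, mul_add]
      simp only [← mul_assoc, ← pow_succ]
      push_cast
      rw [add_smul, one_smul]
      abel
  induction k with
  | zero => simp
  | succ k ih =>
    rw [pow_succ', ih, Finset.mul_sum]
    have hstep : ∀ i ∈ Finset.range (k + 1),
        (x + p • y) * (((k.choose i : R) * (ascPochhammer R i).eval p) • (y ^ i * x ^ (k - i)))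
        = ((k.choose i : R) * (ascPochhammer R i).eval p) • (y ^ i * x ^ (k + 1 - i))
          + ((k.choose i : R) * (ascPochhammer R (i + 1)).eval p) • (y ^ (i + 1) * x ^ (k - i)) := by
      intro i hi
      have hik : i ≤ k := Nat.lt_succ_iff.mp (Finset.mem_range.mp hi)
      have hpow : x ^ (k + 1 - i) = x * x ^ (k - i) := by
        rw [← pow_succ', Nat.succ_sub hik]
      have hasc : (ascPochhammer R (i + 1)).eval p
          = (ascPochhammer R i).eval p * (p + i) := by
        rw [ascPochhammer_succ_right]
        simp
      have hxm : x * (y ^ i * x ^ (k - i))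
          = y ^ i * x ^ (k + 1 - i) + (i : R) • (y ^ (i + 1) * x ^ (k - i)) := by
        rw [← mul_assoc, hx i, add_mul, smul_mul_assoc, mul_assoc, ← hpow]
      have hym : y * (y ^ i * x ^ (k - i)) = y ^ (i + 1) * x ^ (k - i) := by
        rw [← mul_assoc, ← pow_succ']
      rw [add_mul, mul_smul_comm, hxm, smul_mul_assoc, mul_smul_comm, hym, hasc]
      module
    rw [Finset.sum_congr rfl hstep, Finset.sum_add_distrib]
    set Ai : ℕ → A := fun i =>
      ((k.choose i : R) * (ascPochhammer R i).eval p) • (y ^ i * x ^ (k + 1 - i)) with hA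
    set Bi : ℕ → A := fun i =>
      ((k.choose i : R) * (ascPochhammer R (i + 1)).eval p) • (y ^ (i + 1) * x ^ (k - i)) with hB
    set fi : ℕ → A := fun i =>
      (((k + 1).choose i : R) * (ascPochhammer R i).eval p) • (y ^ i * x ^ (k + 1 - i)) with hf
    have hsplit : ∀ i, fi (i + 1) = Bi i + Ai (i + 1) := by
      intro i
      simp only [hA, hB, hf, Nat.choose_succ_succ, Nat.succ_sub_succ]
      push_cast
      rw [add_mul, add_smul]
    have hAk : Ai (k + 1) = 0 := by
      simp [hA, Nat.choose_succ_self]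
    have hf0 : fi 0 = Ai 0 := by simp [hA, hf]
    have hAext : ∑ i ∈ Finset.range (k + 1), Ai (i + 1) = ∑ i ∈ Finset.range k, Ai (i + 1) := by
      rw [Finset.sum_range_succ]
      simp [hAk]
    rw [Finset.sum_range_succ' fi (k + 1)]
    simp only [hsplit]
    rw [Finset.sum_add_distrib, hf0, hAext, Finset.sum_range_succ' Ai k]
    abel
end

section
/- Let R be a commutative ring, let A be an associative R-algebra, and let x, y ∈ A satisfy x·y = y·x + y·y. Then for every p ∈ R and every natural number k, the ordered product ∏_{i=0}^{k−1} (x + (p − k + 1 + 2i)•y) (factors multiplied in order of increasing i from left to right) equals Σ_{i=0}^{k} C(k,i)·(p·(p+1)·…·(p+i−1))•(y^i · x^{k−i}), where C(k,i) is the binomial coefficient and p·(p+1)·…·(p+i−1) denotes the rising factorial in R (equal to 1 when i = 0). -/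
private lemma asc_eval_succ_left (R : Type*) [CommRing R] (n : ℕ) (p : R) :
    (ascPochhammer R (n + 1)).eval p = p * (ascPochhammer R n).eval (p + 1) := by
  rw [ascPochhammer_succ_left, Polynomial.eval_mul, Polynomial.eval_X, Polynomial.eval_comp,
    Polynomial.eval_add, Polynomial.eval_X, Polynomial.eval_one]

private lemma jp_comm {A : Type*} [Ring A] (x y : A) (hxy : x * y = y * x + y * y) :
    ∀ i : ℕ, x * y ^ i = y ^ i * x + i • y ^ (i + 1) := by
  intro i
  induction i with
  | zero => simp
  | succ n ihn =>
    have h : x * y ^ (n + 1) = y ^ (n+1) * x + y ^ (n+1) * y + n • (y ^ (n+1) * y) := by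
      calc x * y ^ (n+1) = (x * y ^ n) * y := by rw [pow_succ, ← mul_assoc]
      _ = (y ^ n * x + n • y ^ (n+1)) * y := by rw [ihn]
      _ = y ^ n * (x * y) + n • (y ^ (n+1) * y) := by
            rw [add_mul, mul_assoc, smul_mul_assoc]
      _ = y ^ n * (y * x) + y ^ n * (y * y) + n • (y ^ (n+1) * y) := by rw [hxy, mul_add]
      _ = y ^ (n+1) * x + y ^ (n+1) * y + n • (y ^ (n+1) * y) := by
            rw [← mul_assoc, ← mul_assoc, ← pow_succ]
    rw [h, ← pow_succ, succ_nsmul]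
    abel

/-- In an associative `R`-algebra, if `x * y = y * x + y * y`, then for every
`p : R` and natural number `k`, the ordered product
`∏_{i=0}^{k-1} (x + (p - k + 1 + 2 i) • y)` (factors multiplied from left to
right in order of increasing `i`) equals
`∑_{i=0}^{k} C(k,i) * (p (p+1) ⋯ (p+i-1)) • (y ^ i * x ^ (k - i))`. -/
theorem jordan_plane_ordered_product_eq_binomial_expansion
    (R : Type*) (A : Type*) [CommRing R] [Ring A] [Algebra R A]
    (x y : A) (hxy : x * y = y * x + y * y) (p : R) (k : ℕ) :
    ((List.range k).map
        (fun (i : ℕ) => x + (p - (k : R) + 1 + 2 * (i : R)) • y)).prod =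
      ∑ i ∈ Finset.range (k + 1),
        ((k.choose i : R) * (ascPochhammer R i).eval p) • (y ^ i * x ^ (k - i)) := by
  induction k generalizing p with
  | zero => simp
  | succ k ih =>
    rw [List.range_succ_eq_map, List.map_cons, List.prod_cons, List.map_map]
    have hfun : ((fun i : ℕ => x + (p - ((k + 1 : ℕ) : R) + 1 + 2 * (i : R)) • y) ∘ Nat.succ)
        = fun i : ℕ => x + ((p + 1) - (k : R) + 1 + 2 * (i : R)) • y := by
      funext i
      simp only [Function.comp_apply]
      congr 1
      push_cast
      ring
    rw [hfun, ih (p + 1)]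
    have ha : (p - ((k + 1 : ℕ) : R) + 1 + 2 * ((0 : ℕ) : R)) = p - k := by push_cast; ring
    rw [ha]
    set c : ℕ → R := fun i => (k.choose i : R) * (ascPochhammer R i).eval (p + 1) with hc
    -- expand the product
    have hexp : (x + (p - (k : R)) • y) *
        (∑ i ∈ Finset.range (k + 1), c i • (y ^ i * x ^ (k - i))) =
        (∑ i ∈ Finset.range (k + 1), c i • (y ^ i * x ^ (k + 1 - i)))
        + (∑ i ∈ Finset.range (k + 1),
            ((p - (k : R) + i) * c i) • (y ^ (i + 1) * x ^ (k - i))) := by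
      rw [Finset.mul_sum, ← Finset.sum_add_distrib]
      refine Finset.sum_congr rfl fun i hi => ?_
      have hik : i ≤ k := Nat.lt_succ_iff.mp (Finset.mem_range.mp hi)
      have h1 : k + 1 - i = (k - i) + 1 := by omega
      rw [h1, add_mul, mul_smul_comm, ← mul_assoc, jp_comm x y hxy i]
      have m1 : (y ^ i * x + i • y ^ (i+1)) * x ^ (k - i) =
          y ^ i * x ^ ((k - i) + 1) + i • (y ^ (i+1) * x ^ (k - i)) := by
        rw [add_mul, mul_assoc, ← pow_succ', smul_mul_assoc]
      have m2 : y * (c i • (y ^ i * x ^ (k - i))) = c i • (y ^ (i+1) * x ^ (k - i)) := by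
        rw [mul_smul_comm, ← mul_assoc, ← pow_succ']
      rw [m1, smul_mul_assoc, m2, smul_smul, smul_add]
      have h2 : c i • (i • (y ^ (i+1) * x ^ (k-i)))
          = ((i : R) * c i) • (y ^ (i+1) * x ^ (k-i)) := by
        rw [smul_comm, ← Nat.cast_smul_eq_nsmul R i, smul_smul]
      rw [h2, add_assoc, ← add_smul]
      congr 2
      ring
    rw [hexp]
    -- now match with the target sum
    rw [Finset.sum_range_succ' (fun i => ((Nat.choose (k+1) i : R) * (ascPochhammer R i).eval p) • (y ^ i * x ^ (k + 1 - i)))]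
    rw [Finset.sum_range_succ' (fun i => c i • (y ^ i * x ^ (k + 1 - i)))]
    rw [Finset.sum_range_succ (fun i => ((p - (k : R) + i) * c i) • (y ^ (i+1) * x ^ (k - i)))]
    rw [Finset.sum_range_succ (fun i => ((Nat.choose (k+1) (i+1) : R) * (ascPochhammer R (i+1)).eval p) • (y ^ (i+1) * x ^ (k + 1 - (i+1))))]
    have e0 : ((Nat.choose (k+1) 0 : R) * (ascPochhammer R 0).eval p) • ((y:A) ^ 0 * x ^ (k + 1 - 0))
        = c 0 • ((y:A) ^ 0 * x ^ (k + 1 - 0)) := by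
      simp [hc]
    have etop : ((Nat.choose (k+1) (k+1) : R) * (ascPochhammer R (k+1)).eval p) • (y ^ (k+1) * x ^ (k + 1 - (k+1)))
        = ((p - (k : R) + k) * c k) • (y ^ (k+1) * x ^ (k - k)) := by
      rw [asc_eval_succ_left]
      simp [hc]
    rw [e0, etop]
    have emid : ∑ i ∈ Finset.range k,
        ((Nat.choose (k+1) (i+1) : R) * (ascPochhammer R (i+1)).eval p) • (y ^ (i+1) * x ^ (k + 1 - (i+1)))
        = ∑ i ∈ Finset.range k, (c (i+1) • (y ^ (i+1) * x ^ (k - i))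
            + ((p - (k : R) + i) * c i) • (y ^ (i+1) * x ^ (k - i))) := by
      refine Finset.sum_congr rfl fun i hi => ?_
      have hik : i < k := Finset.mem_range.mp hi
      have h1 : k + 1 - (i + 1) = k - i := by omega
      rw [h1, ← add_smul]
      congr 1
      rw [asc_eval_succ_left, hc]
      simp only
      rw [ascPochhammer_succ_eval]
      have hch : ((k+1).choose (i+1) : R) = (k.choose (i+1) : R) + (k.choose i : R) := by
        rw [Nat.choose_succ_succ]
        push_cast
        ring
      have hrec : ((i:R) + 1) * (k.choose (i+1) : R) = ((k : R) - i) * (k.choose i : R) := by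
        have h2 : ((k.choose (i+1) * (i+1) : ℕ) : R) = ((k.choose i * (k - i) : ℕ) : R) :=
          congrArg (Nat.cast : ℕ → R) (Nat.choose_succ_right_eq k i)
        push_cast [Nat.cast_sub hik.le] at h2
        linear_combination h2
      rw [hch]
      linear_combination (-(Polynomial.eval (p+1) (ascPochhammer R i))) * hrec
    rw [emid, Finset.sum_add_distrib]
    simp only [Nat.succ_sub_succ]
    abel
end

section
/- Let A^J be the Jordan plane over ℂ, and let X, Y ∈ A^J denote the images of the two generators, so that X·Y = Y·X + Y·Y in A^J. Then for every complex number p and every natural number k, (X + p•Y)^k = (X + (p−k+1)•Y)·(X + (p−k+3)•Y)· … ·(X + (p+k−1)•Y), i.e., (X + p•Y)^k = ∏_{i=0}^{k−1} (X + (p − k + 1 + 2i)•Y), with factors multiplied in order of increasing i from left to right. -/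
open FreeAlgebra

/-- The free associative ℂ-algebra on two generators. -/
abbrev FreeTwo : Type := FreeAlgebra ℂ (Fin 2)

/-- The defining relation of the Jordan plane: `x * y = y * x + y * y`. -/
def jordanRel : FreeTwo → FreeTwo → Prop :=
  fun a b => a = ι ℂ 0 * ι ℂ 1 ∧ b = ι ℂ 1 * ι ℂ 0 + ι ℂ 1 * ι ℂ 1

/-- The Jordan plane `ℂ⟨x,y⟩/(xy - yx - y²)`. -/
abbrev JordanPlane : Type := RingQuot jordanRel

/-- The image `X` of the generator `x` in the Jordan plane. -/
noncomputable def JX : JordanPlane := RingQuot.mkAlgHom ℂ jordanRel (ι ℂ 0)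

/-- The image `Y` of the generator `y` in the Jordan plane. -/
noncomputable def JY : JordanPlane := RingQuot.mkAlgHom ℂ jordanRel (ι ℂ 1)

noncomputable def jF (c : ℂ) : JordanPlane := JX + c • JY

lemma jF_swap (hXY : JX * JY = JY * JX + JY * JY) (a b : ℂ) :
    jF a * jF b = jF (b - 1) * jF (a + 1) := by
  simp only [jF, add_mul, mul_add, smul_mul_assoc, mul_smul_comm, smul_smul, hXY]
  module

lemma jF_move (hXY : JX * JY = JY * JX + JY * JY) :
    ∀ (l : List ℂ) (a : ℂ),
      jF a * (l.map jF).prod =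
        (l.map (fun c => jF (c - 1))).prod * jF (a + l.length) := by
  intro l
  induction l with
  | nil => intro a; simp
  | cons c l ih =>
    intro a
    simp only [List.map_cons, List.prod_cons, List.length_cons]
    rw [← mul_assoc, jF_swap hXY, mul_assoc, ih (a + 1), ← mul_assoc]
    congr 2
    push_cast
    ring

/-- In the Jordan plane (where `X * Y = Y * X + Y * Y`), for every `p : ℂ` and
natural number `k`,
`(X + p • Y) ^ k = ∏_{i=0}^{k-1} (X + (p - k + 1 + 2 i) • Y)` with factors
multiplied from left to right in order of increasing `i`. -/
theorem jordanPlane_ordered_product_identity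
    (hXY : JX * JY = JY * JX + JY * JY) (p : ℂ) (k : ℕ) :
    (JX + p • JY) ^ k =
      ((List.range k).map
        (fun (i : ℕ) => JX + (p - (k : ℂ) + 1 + 2 * (i : ℂ)) • JY)).prod := by
  induction k with
  | zero => simp
  | succ k ih =>
    have key : ((List.range k).map
        (fun (i : ℕ) => JX + (p - (k : ℂ) + 1 + 2 * (i : ℂ)) • JY))
        = ((List.range k).map (fun i : ℕ => p - (k : ℂ) + 1 + 2 * (i : ℂ))).map jF := by
      simp [jF, Function.comp]
    rw [pow_succ', ih, key, show (JX + p • JY) = jF p from rfl, jF_move hXY]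
    rw [List.range_succ, List.map_append, List.prod_append, List.map_map]
    congr 1
    · apply congrArg List.prod
      apply List.map_congr_left
      intro i _
      simp only [Function.comp, jF]
      congr 2
      push_cast
      ring
    · simp only [List.map_cons, List.map_nil, List.prod_cons, List.prod_nil, mul_one,
        List.length_map, List.length_range, jF]
      congr 2
      push_cast
      ring
end

section
/- Let A^J be the Jordan plane over ℂ with X, Y the images of the two generators. Then the family of monomials (i, j) ↦ Y^i · X^j, indexed by pairs of natural numbers (i, j), is a basis of A^J as a ℂ-vector space. In particular, for every natural number r, the r-th homogeneous component of A^J (the image in A^J of the span of all products of exactly r generators of the free algebra) has ℂ-dimension r + 1, so A^J has polynomial growth. -/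
open FreeAlgebra

/-- The ℂ-span of the generators of the free algebra; its `r`-th power is the
span of all products of exactly `r` generators. -/
noncomputable def gens : Submodule ℂ FreeTwo :=
  Submodule.span ℂ (Set.range (ι ℂ : Fin 2 → FreeTwo))

open Polynomial in
abbrev V : Type := Polynomial (Polynomial ℂ)
noncomputable def Yop : V →ₗ[ℂ] V := LinearMap.mulLeft ℂ (Polynomial.X : V)
noncomputable def Xop : V →ₗ[ℂ] V :=
  LinearMap.mulLeft ℂ (Polynomial.C Polynomial.X : V) +
    (LinearMap.mulLeft ℂ ((Polynomial.X : V) ^ 2)) ∘ₗ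
      (Polynomial.derivative.restrictScalars ℂ)
theorem Xop_apply (p : V) : Xop p = Polynomial.C Polynomial.X * p + Polynomial.X ^ 2 * Polynomial.derivative p := rfl
theorem Yop_apply (p : V) : Yop p = Polynomial.X * p := rfl

theorem oprel : Xop * Yop = Yop * Xop + Yop * Yop := by
  refine LinearMap.ext fun p => ?_
  simp only [Module.End.mul_apply, LinearMap.add_apply, Xop_apply, Yop_apply,
    Polynomial.derivative_mul, Polynomial.derivative_X, mul_add]
  ring

noncomputable def φ0 : FreeTwo →ₐ[ℂ] Module.End ℂ V := FreeAlgebra.lift ℂ ![Xop, Yop]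

theorem φ0_rel : ∀ ⦃a b⦄, jordanRel a b → φ0 a = φ0 b := by
  rintro a b ⟨rfl, rfl⟩
  simp only [map_mul, map_add, φ0, FreeAlgebra.lift_ι_apply]
  show Xop * Yop = Yop * Xop + Yop * Yop
  exact oprel

noncomputable def φ : JordanPlane →ₐ[ℂ] Module.End ℂ V :=
  RingQuot.liftAlgHom ℂ ⟨φ0, φ0_rel⟩

theorem φ_JX : φ JX = Xop := by
  rw [JX, φ, RingQuot.liftAlgHom_mkAlgHom_apply]
  simp [φ0]
theorem φ_JY : φ JY = Yop := by
  rw [JY, φ, RingQuot.liftAlgHom_mkAlgHom_apply]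
  simp [φ0]

theorem Xop_pow_one (j : ℕ) : (Xop ^ j) 1 = Polynomial.C (Polynomial.X ^ j) := by
  induction j with
  | zero => simp
  | succ j ih =>
    rw [pow_succ', Module.End.mul_apply, ih, Xop_apply]
    simp [pow_succ, mul_comm, ← map_pow]

theorem Yop_pow (i : ℕ) (p : V) : (Yop ^ i) p = Polynomial.X ^ i * p := by
  induction i with
  | zero => simp
  | succ i ih => rw [pow_succ', Module.End.mul_apply, Yop_apply, ih]; ring

noncomputable def ψ : JordanPlane →ₗ[ℂ] V := (LinearMap.applyₗ (1 : V)).comp φ.toLinearMap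

theorem ψ_apply (a : JordanPlane) : ψ a = φ a 1 := rfl

theorem ψ_mono (i j : ℕ) : ψ (JY ^ i * JX ^ j) = Polynomial.X ^ i * Polynomial.C (Polynomial.X ^ j) := by
  rw [ψ_apply, map_mul, map_pow, map_pow, φ_JX, φ_JY, Module.End.mul_apply, Xop_pow_one, Yop_pow]

theorem indepV : LinearIndependent ℂ (fun p : ℕ × ℕ => (Polynomial.X : V) ^ p.1 * Polynomial.C (Polynomial.X ^ p.2)) := by
  have h2 := (((Polynomial.basisMonomials ℂ).smulTower
      (Polynomial.basisMonomials (Polynomial ℂ))).linearIndependent).comp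
    (fun p : ℕ × ℕ => (p.2, p.1)) (fun a b hab => by simpa [Prod.ext_iff, and_comm] using hab)
  convert h2 using 2 with p
  simp only [Function.comp_apply, Module.Basis.smulTower_apply, Polynomial.coe_basisMonomials,
    Polynomial.smul_eq_C_mul, Polynomial.monomial_one_right_eq_X_pow]
  rw [← Polynomial.monomial_one_right_eq_X_pow p.2]
  ring

theorem indepJ : LinearIndependent ℂ (fun p : ℕ × ℕ => JY ^ p.1 * JX ^ p.2) := by
  have := indepV
  refine LinearIndependent.of_comp ψ ?_
  convert indepV using 1
  funext p
  exact ψ_mono p.1 p.2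

noncomputable def m : ℕ × ℕ → JordanPlane := fun p => JY ^ p.1 * JX ^ p.2

theorem jrel : JX * JY = JY * JX + JY * JY := by
  have h := RingQuot.mkAlgHom_rel ℂ (s := jordanRel)
    (x := ι ℂ 0 * ι ℂ 1) (y := ι ℂ 1 * ι ℂ 0 + ι ℂ 1 * ι ℂ 1) ⟨rfl, rfl⟩
  simpa only [map_mul, map_add, JX, JY] using h

theorem comm_pow (i : ℕ) : JX * JY ^ i = JY ^ i * JX + (i : ℂ) • JY ^ (i + 1) := by
  induction i with
  | zero => simp
  | succ i ih =>
    have h2 : JY ^ i * (JY * JY) = JY ^ (i + 1 + 1) := by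
      rw [← mul_assoc, ← pow_succ, ← pow_succ]
    calc JX * JY ^ (i + 1) = (JX * JY ^ i) * JY := by rw [pow_succ, mul_assoc]
    _ = JY ^ i * (JX * JY) + (i : ℂ) • (JY ^ (i + 1) * JY) := by
        rw [ih, add_mul, smul_mul_assoc, mul_assoc]
    _ = JY ^ (i + 1) * JX + JY ^ (i + 1 + 1) + (i : ℂ) • JY ^ (i + 1 + 1) := by
        rw [jrel, mul_add, ← mul_assoc, ← pow_succ, h2, ← pow_succ]
    _ = JY ^ (i + 1) * JX + ((i : ℂ) + 1) • JY ^ (i + 1 + 1) := by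
        rw [add_smul, one_smul]; abel
    _ = _ := by push_cast; ring_nf

theorem JX_mul_mono (i j : ℕ) :
    JX * (JY ^ i * JX ^ j) = JY ^ i * JX ^ (j + 1) + (i : ℂ) • (JY ^ (i + 1) * JX ^ j) := by
  rw [← mul_assoc, comm_pow, add_mul, smul_mul_assoc, mul_assoc, ← pow_succ']

theorem JY_mul_mono (i j : ℕ) : JY * (JY ^ i * JX ^ j) = JY ^ (i + 1) * JX ^ j := by
  rw [← mul_assoc, ← pow_succ']

noncomputable def S : Submodule ℂ JordanPlane := Submodule.span ℂ (Set.range m)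

theorem mono_mem_S (i j : ℕ) : JY ^ i * JX ^ j ∈ S :=
  Submodule.subset_span ⟨(i, j), rfl⟩

theorem JX_mul_mem (s : JordanPlane) (hs : s ∈ S) : JX * s ∈ S := by
  induction hs using Submodule.span_induction with
  | mem x hx =>
    obtain ⟨⟨i, j⟩, rfl⟩ := hx
    show JX * (JY ^ i * JX ^ j) ∈ S
    rw [JX_mul_mono]
    exact add_mem (mono_mem_S i (j + 1)) (Submodule.smul_mem _ _ (mono_mem_S (i + 1) j))
  | zero => simpa using S.zero_mem
  | add x y _ _ hx hy => rw [mul_add]; exact add_mem hx hy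
  | smul c x _ hx => rw [mul_smul_comm]; exact Submodule.smul_mem _ _ hx

theorem JY_mul_mem (s : JordanPlane) (hs : s ∈ S) : JY * s ∈ S := by
  induction hs using Submodule.span_induction with
  | mem x hx =>
    obtain ⟨⟨i, j⟩, rfl⟩ := hx
    show JY * (JY ^ i * JX ^ j) ∈ S
    rw [JY_mul_mono]; exact mono_mem_S (i + 1) j
  | zero => simpa using S.zero_mem
  | add x y _ _ hx hy => rw [mul_add]; exact add_mem hx hy
  | smul c x _ hx => rw [mul_smul_comm]; exact Submodule.smul_mem _ _ hx

theorem mul_mem_S (a : FreeTwo) (s : JordanPlane) (hs : s ∈ S) :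
    RingQuot.mkAlgHom ℂ jordanRel a * s ∈ S := by
  induction a using FreeAlgebra.induction generalizing s with
  | grade0 r =>
    rw [AlgHom.commutes, ← Algebra.smul_def]
    exact Submodule.smul_mem _ _ hs
  | grade1 i =>
    fin_cases i
    · exact JX_mul_mem s hs
    · exact JY_mul_mem s hs
  | mul a b ha hb => rw [map_mul, mul_assoc]; exact ha _ (hb _ hs)
  | add a b ha hb => rw [map_add, add_mul]; exact add_mem (ha _ hs) (hb _ hs)

theorem S_top : S = ⊤ := by
  rw [eq_top_iff]
  rintro x -
  obtain ⟨a, rfl⟩ := RingQuot.mkAlgHom_surjective ℂ jordanRel x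
  simpa using mul_mem_S a 1 (by simpa using mono_mem_S 0 0)

noncomputable def Sr (r : ℕ) : Submodule ℂ JordanPlane :=
  Submodule.span ℂ (m '' {p | p.1 + p.2 = r})

theorem mono_mem_Sr {i j r : ℕ} (h : i + j = r) : JY ^ i * JX ^ j ∈ Sr r :=
  Submodule.subset_span ⟨(i, j), h, rfl⟩

theorem map_gens_eq : Submodule.map (RingQuot.mkAlgHom ℂ jordanRel).toLinearMap gens
    = Submodule.span ℂ {JX, JY} := by
  rw [gens, Submodule.map_span]
  congr 1
  ext a
  constructor
  · rintro ⟨_, ⟨i, rfl⟩, rfl⟩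
    fin_cases i
    · exact Or.inl rfl
    · exact Or.inr rfl
  · rintro (rfl | rfl)
    · exact ⟨_, ⟨0, rfl⟩, rfl⟩
    · exact ⟨_, ⟨1, rfl⟩, rfl⟩

theorem span_mul_Sr (r : ℕ) : Submodule.span ℂ {JX, JY} * Sr r = Sr (r + 1) := by
  apply le_antisymm
  · rw [Submodule.mul_le]
    intro x hx y hy
    induction hx using Submodule.span_induction generalizing y with
    | mem x hx =>
      rcases hx with rfl | rfl
      · induction hy using Submodule.span_induction with
        | mem z hz =>
          obtain ⟨⟨i, j⟩, hij, rfl⟩ := hz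
          replace hij : i + j = r := hij
          show JX * (JY ^ i * JX ^ j) ∈ _
          rw [JX_mul_mono]
          exact add_mem (mono_mem_Sr (by omega)) (Submodule.smul_mem _ _ (mono_mem_Sr (by omega)))
        | zero => simp
        | add a b _ _ ha hb => rw [mul_add]; exact add_mem ha hb
        | smul c a _ ha => rw [mul_smul_comm]; exact Submodule.smul_mem _ _ ha
      · induction hy using Submodule.span_induction with
        | mem z hz =>
          obtain ⟨⟨i, j⟩, hij, rfl⟩ := hz
          replace hij : i + j = r := hij
          show JY * (JY ^ i * JX ^ j) ∈ _
          rw [JY_mul_mono]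
          exact mono_mem_Sr (by omega)
        | zero => simp
        | add a b _ _ ha hb => rw [mul_add]; exact add_mem ha hb
        | smul c a _ ha => rw [mul_smul_comm]; exact Submodule.smul_mem _ _ ha
    | zero => simp
    | add a b _ _ ha hb => rw [add_mul]; exact add_mem (ha _ hy) (hb _ hy)
    | smul c a _ ha => rw [smul_mul_assoc]; exact Submodule.smul_mem _ _ (ha _ hy)
  · rw [Sr, Submodule.span_le]
    rintro _ ⟨⟨i, j⟩, hij, rfl⟩
    replace hij : i + j = r + 1 := hij
    show JY ^ i * JX ^ j ∈ _
    cases i with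
    | zero =>
      have hj : j = r + 1 := by omega
      subst hj
      have : (JY : JordanPlane) ^ 0 * JX ^ (r + 1) = JX * (JY ^ 0 * JX ^ r) := by
        rw [pow_zero, one_mul, one_mul, ← pow_succ']
      rw [this]
      exact Submodule.mul_mem_mul (Submodule.subset_span (Or.inl rfl)) (mono_mem_Sr (by omega))
    | succ i =>
      have : (JY : JordanPlane) ^ (i + 1) * JX ^ j = JY * (JY ^ i * JX ^ j) := by
        rw [← mul_assoc, ← pow_succ']
      rw [this]
      exact Submodule.mul_mem_mul (Submodule.subset_span (Or.inr rfl)) (mono_mem_Sr (by omega))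

theorem map_gens_pow (r : ℕ) :
    Submodule.map (RingQuot.mkAlgHom ℂ jordanRel).toLinearMap (gens ^ r) = Sr r := by
  induction r with
  | zero =>
    rw [pow_zero, Submodule.one_eq_span, Submodule.map_span]
    congr 1
    ext a
    constructor
    · rintro ⟨_, rfl, rfl⟩
      exact ⟨(0, 0), rfl, by simp [m]⟩
    · rintro ⟨⟨i, j⟩, hij, rfl⟩
      replace hij : i + j = 0 := hij
      obtain ⟨rfl, rfl⟩ : i = 0 ∧ j = 0 := by constructor <;> omega
      exact ⟨1, rfl, by simp [m]⟩
  | succ r ih =>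
    rw [pow_succ', Submodule.map_mul, ih, map_gens_eq, span_mul_Sr]

theorem Sr_eq_span_range (r : ℕ) :
    Sr r = Submodule.span ℂ (Set.range fun k : Fin (r + 1) => JY ^ (k : ℕ) * JX ^ (r - (k : ℕ))) := by
  rw [Sr]
  congr 1
  ext a
  constructor
  · rintro ⟨⟨i, j⟩, hij, rfl⟩
    replace hij : i + j = r := hij
    refine ⟨⟨i, by omega⟩, ?_⟩
    show JY ^ i * JX ^ (r - i) = m (i, j)
    have : r - i = j := by omega
    rw [this]; rfl
  · rintro ⟨k, rfl⟩
    have hk : (k : ℕ) ≤ r := Nat.lt_succ_iff.mp k.isLt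
    exact ⟨((k : ℕ), r - (k : ℕ)), show (k : ℕ) + (r - (k : ℕ)) = r by omega, rfl⟩

theorem finrank_Sr (r : ℕ) : Module.finrank ℂ (Sr r) = r + 1 := by
  have hli : LinearIndependent ℂ (fun k : Fin (r + 1) => JY ^ (k : ℕ) * JX ^ (r - (k : ℕ))) := by
    have := indepJ.comp (fun k : Fin (r + 1) => ((k : ℕ), r - (k : ℕ)))
      (fun a b hab => by
        have : (a : ℕ) = b := congrArg Prod.fst hab
        exact Fin.val_injective this)
    exact this
  rw [Sr_eq_span_range]
  rw [finrank_span_eq_card hli, Fintype.card_fin]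

/-- The monomials `Y^i * X^j` form a ℂ-basis of the Jordan plane, and
the image in the Jordan plane of the degree-`r` homogeneous component of the
free algebra has dimension `r + 1`: the Jordan plane has polynomial growth. -/
theorem jordanPlane_basis_and_polynomial_growth :
    (∃ b : Module.Basis (ℕ × ℕ) ℂ JordanPlane, ∀ i j : ℕ, b (i, j) = JY ^ i * JX ^ j) ∧
    ∀ r : ℕ,
      Module.finrank ℂ
        (Submodule.map (RingQuot.mkAlgHom ℂ jordanRel).toLinearMap (gens ^ r))
        = r + 1 := by
  constructor
  · refine ⟨Module.Basis.mk indepJ ?_, fun i j => Module.Basis.mk_apply _ _ _⟩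
    rw [show Set.range (fun p : ℕ × ℕ => JY ^ p.1 * JX ^ p.2) = Set.range m from rfl, ← S, S_top]
  · intro r
    rw [map_gens_pow]
    exact finrank_Sr r
end

section
/- For every nonzero complex number q, the Jordan plane A^J is not isomorphic as a ℂ-algebra to the quantum plane A_q with parameter q; that is, there is no ℂ-algebra isomorphism A^J ≃ A_q. -/
open FreeAlgebra

/-- The defining relation of the quantum plane with parameter `q`:
`x * y = q • (y * x)`. -/
def quantumRel (q : ℂ) : FreeTwo → FreeTwo → Prop :=
  fun a b => a = ι ℂ 0 * ι ℂ 1 ∧ b = q • (ι ℂ 1 * ι ℂ 0)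

/-- The quantum plane `ℂ⟨x,y⟩/(xy - q·yx)`. -/
abbrev QuantumPlane (q : ℂ) : Type := RingQuot (quantumRel q)

open Polynomial

noncomputable abbrev BB : Type := Polynomial ℂ × Polynomial ℂ

/-- x ↦ (X,0), y ↦ (0,X) on the free algebra. -/
noncomputable def fFree : FreeTwo →ₐ[ℂ] BB :=
  FreeAlgebra.lift ℂ (fun i => if i = 0 then ((X : ℂ[X]), (0 : ℂ[X])) else (0, X))

lemma fFree_rel (q : ℂ) : ∀ ⦃a b : FreeTwo⦄, quantumRel q a b → fFree a = fFree b := by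
  rintro a b ⟨rfl, rfl⟩
  simp [fFree, Prod.ext_iff]

noncomputable def fQ (q : ℂ) : QuantumPlane q →ₐ[ℂ] BB :=
  RingQuot.liftAlgHom ℂ ⟨fFree, fFree_rel q⟩

/-- x ↦ X, y ↦ 0 on the free algebra. -/
noncomputable def gFree : FreeTwo →ₐ[ℂ] ℂ[X] :=
  FreeAlgebra.lift ℂ (fun i => if i = 0 then (X : ℂ[X]) else 0)

lemma gFree_rel : ∀ ⦃a b : FreeTwo⦄, jordanRel a b → gFree a = gFree b := by
  rintro a b ⟨rfl, rfl⟩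
  simp [gFree]

noncomputable def gJ : JordanPlane →ₐ[ℂ] ℂ[X] :=
  RingQuot.liftAlgHom ℂ ⟨gFree, gFree_rel⟩

/-- For every nonzero `q : ℂ`, the Jordan plane is not isomorphic as a
ℂ-algebra to the quantum plane with parameter `q`. -/
theorem jordanPlane_not_iso_quantumPlane (q : ℂ) (hq : q ≠ 0) :
    ¬ Nonempty (JordanPlane ≃ₐ[ℂ] QuantumPlane q) := by
  rintro ⟨e⟩
  set ψ : JordanPlane →ₐ[ℂ] BB := (fQ q).comp e.toAlgHom with hψ
  set mkJ := RingQuot.mkAlgHom ℂ jordanRel with hmkJ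
  set Y : BB := ψ (mkJ (ι ℂ 1)) with hY
  set X' : BB := ψ (mkJ (ι ℂ 0)) with hX'
  have hrel : X' * Y = Y * X' + Y * Y := by
    have h0 : mkJ (ι ℂ 0 * ι ℂ 1) = mkJ (ι ℂ 1 * ι ℂ 0 + ι ℂ 1 * ι ℂ 1) :=
      RingQuot.mkAlgHom_rel ℂ ⟨rfl, rfl⟩
    have h := congrArg ψ h0
    simpa only [map_mul, map_add] using h
  have hY2 : Y * Y = 0 := by
    have h := hrel
    rw [mul_comm Y X'] at h
    exact (add_eq_left.mp h.symm)
  have hY0 : Y = 0 := by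
    have h1 : Y.1 * Y.1 = 0 := congrArg Prod.fst hY2
    have h2 : Y.2 * Y.2 = 0 := congrArg Prod.snd hY2
    have e1 : Y.1 = 0 := by rcases mul_eq_zero.mp h1 with h | h <;> exact h
    have e2 : Y.2 = 0 := by rcases mul_eq_zero.mp h2 with h | h <;> exact h
    exact Prod.ext e1 e2
  have hfactor : ψ = (Polynomial.aeval X').comp gJ := by
    apply RingQuot.ringQuot_ext'
    apply FreeAlgebra.hom_ext
    funext i
    fin_cases i
    · show ψ (mkJ (ι ℂ 0)) = Polynomial.aeval X' (gJ (mkJ (ι ℂ 0)))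
      rw [gJ, hmkJ, RingQuot.liftAlgHom_mkAlgHom_apply]
      simp [gFree, ← hX']
      exact hX'.symm
    · show ψ (mkJ (ι ℂ 1)) = Polynomial.aeval X' (gJ (mkJ (ι ℂ 1)))
      rw [gJ, hmkJ, RingQuot.liftAlgHom_mkAlgHom_apply]
      rw [← hY, hY0]
      simp [gFree]
  set mkQ := RingQuot.mkAlgHom ℂ (quantumRel q) with hmkQ
  obtain ⟨P, hP⟩ : ∃ P : ℂ[X], Polynomial.aeval X' P = ((X : ℂ[X]), (0 : ℂ[X])) := by
    refine ⟨gJ (e.symm (mkQ (ι ℂ 0))), ?_⟩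
    have h : ψ (e.symm (mkQ (ι ℂ 0))) = ((X : ℂ[X]), (0 : ℂ[X])) := by
      rw [hψ]
      simp only [AlgHom.comp_apply, AlgEquiv.toAlgHom_eq_coe, AlgHom.coe_coe, AlgEquiv.coe_toAlgHom]
      rw [e.apply_symm_apply, hmkQ, fQ, RingQuot.liftAlgHom_mkAlgHom_apply]
      simp [fFree]
    rw [hfactor] at h
    exact h
  obtain ⟨Q, hQ⟩ : ∃ Q : ℂ[X], Polynomial.aeval X' Q = ((0 : ℂ[X]), (X : ℂ[X])) := by
    refine ⟨gJ (e.symm (mkQ (ι ℂ 1))), ?_⟩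
    have h : ψ (e.symm (mkQ (ι ℂ 1))) = ((0 : ℂ[X]), (X : ℂ[X])) := by
      rw [hψ]
      simp only [AlgHom.comp_apply, AlgEquiv.toAlgHom_eq_coe, AlgHom.coe_coe, AlgEquiv.coe_toAlgHom]
      rw [e.apply_symm_apply, hmkQ, fQ, RingQuot.liftAlgHom_mkAlgHom_apply]
      simp [fFree]
    rw [hfactor] at h
    exact h
  -- component equations
  have hP1 : Polynomial.aeval X'.1 P = X := by
    have h := Polynomial.aeval_algHom_apply (AlgHom.fst ℂ ℂ[X] ℂ[X]) X' P
    rw [hP] at h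
    simpa using h
  have hQ1 : Polynomial.aeval X'.1 Q = 0 := by
    have h := Polynomial.aeval_algHom_apply (AlgHom.fst ℂ ℂ[X] ℂ[X]) X' Q
    rw [hQ] at h
    simpa using h
  have hQ2 : Polynomial.aeval X'.2 Q = X := by
    have h := Polynomial.aeval_algHom_apply (AlgHom.snd ℂ ℂ[X] ℂ[X]) X' Q
    rw [hQ] at h
    simpa using h
  set p : ℂ[X] := X'.1 with hp
  -- p is not constant
  have hpdeg : 0 < p.degree := by
    rw [← Polynomial.natDegree_pos_iff_degree_pos]
    by_contra hc
    push_neg at hc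
    have hcc : p = C (p.coeff 0) := Polynomial.eq_C_of_natDegree_le_zero hc
    rw [hcc, ← comp_eq_aeval, comp_C] at hP1
    exact Polynomial.X_ne_C _ hP1.symm
  -- Q vanishes everywhere, hence Q = 0
  have hQ0 : Q = 0 := by
    apply Polynomial.zero_of_eval_zero
    intro w
    obtain ⟨z, hz⟩ : ∃ z, p.eval z = w := by
      have hd : 0 < (p - C w).degree := by
        rw [Polynomial.degree_sub_C hpdeg]
        exact hpdeg
      obtain ⟨z, hz⟩ := Complex.exists_root hd
      refine ⟨z, ?_⟩
      have h2 : p.eval z - w = 0 := by simpa [Polynomial.IsRoot] using hz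
      exact sub_eq_zero.mp h2
    have : (Q.comp p).eval z = 0 := by
      rw [comp_eq_aeval, hQ1]
      simp
    rw [Polynomial.eval_comp, hz] at this
    exact this
  rw [hQ0] at hQ2
  simp at hQ2
  exact Polynomial.X_ne_zero hQ2.symm
end
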